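/- There is no odd perfect number of the form n = p^α · q^β, where p and q are distinct odd primes, α is even, and β is odd. Consequently (together with the facts that an odd perfect number is not a prime power and has exactly one odd prime exponent), every odd perfect number has at least three distinct prime factors. -/

import Mathlib

open scoped ArithmeticFunction.sigma

open ArithmeticFunction Finset in
lemma sig_mul_pred {p : ℕ} (a : ℕ) (hp : p.Prime) :
    σ 1 (p ^ a) * (p - 1) + 1 = p ^ (a + 1) := by
  rw [ArithmeticFunction.sigma_one_apply_prime_pow hp,
    geom_sum_mul_of_one_le hp.one_lt.le,
    Nat.sub_add_cancel (Nat.one_le_pow _ _ hp.pos)]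

open ArithmeticFunction Finset in
lemma three_le_card (n : ℕ) (ho : Odd n) (hperf : n.Perfect) :
    3 ≤ n.primeFactors.card := by
  by_contra hcard
  push_neg at hcard
  have hn0 : 0 < n := hperf.2
  have hσ : σ 1 n = 2 * n := by
    rw [ArithmeticFunction.sigma_one_apply]
    exact (Nat.perfect_iff_sum_divisors_eq_two_mul hn0).mp hperf
  have hn1 : n ≠ 1 := by rintro rfl; simp [ArithmeticFunction.sigma_one_apply] at hσ
  have hSne : n.primeFactors.Nonempty :=
    Nat.nonempty_primeFactors.mpr (lt_of_le_of_ne hn0 (Ne.symm hn1))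
  set S := n.primeFactors with hS
  have hodd : ∀ p ∈ S, 3 ≤ p ∧ Odd p := by
    intro p hpS
    have hp : p.Prime := Nat.prime_of_mem_primeFactors hpS
    have hpd : p ∣ n := Nat.dvd_of_mem_primeFactors hpS
    have hp2 : p ≠ 2 := by
      rintro rfl
      exact (Nat.not_even_iff_odd.mpr ho) ((even_iff_two_dvd).mpr hpd)
    exact ⟨by have := hp.two_le; omega, hp.odd_of_ne_two hp2⟩
  -- multiplicative factorization
  have hσprod : σ 1 n = ∏ p ∈ S, σ 1 (p ^ n.factorization p) := by
    rw [ArithmeticFunction.IsMultiplicative.multiplicative_factorization _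
      ArithmeticFunction.isMultiplicative_sigma hn0.ne']
    rw [Finsupp.prod, Nat.support_factorization]
  have hnprod : n = ∏ p ∈ S, p ^ n.factorization p := by
    conv_lhs => rw [← Nat.factorization_prod_pow_eq_self hn0.ne']
    rw [Finsupp.prod, Nat.support_factorization]
  -- key inequality
  have hlt : (∏ p ∈ S, σ 1 (p ^ n.factorization p) * (p - 1)) <
      ∏ p ∈ S, p ^ (n.factorization p + 1) := by
    refine Finset.prod_lt_prod_of_nonempty ?_ ?_ hSne
    · intro p hpS
      have hp : p.Prime := Nat.prime_of_mem_primeFactors hpS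
      have := sig_mul_pred (n.factorization p) hp
      have h2 : 2 ≤ p ^ (n.factorization p + 1) :=
        le_trans hp.two_le (Nat.le_self_pow (by omega) p)
      omega
    · intro p hpS
      have hp : p.Prime := Nat.prime_of_mem_primeFactors hpS
      have := sig_mul_pred (n.factorization p) hp
      omega
  rw [Finset.prod_mul_distrib] at hlt
  have hrhs : (∏ p ∈ S, p ^ (n.factorization p + 1)) = n * ∏ p ∈ S, p := by
    simp_rw [pow_succ]
    rw [Finset.prod_mul_distrib, ← hnprod]
  rw [← hσprod, hσ, hrhs] at hlt
  -- hlt : 2 * n * ∏ (p-1) < n * ∏ p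
  have hcancel : 2 * ∏ p ∈ S, (p - 1) < ∏ p ∈ S, p := by
    have : n * (2 * ∏ p ∈ S, (p - 1)) < n * ∏ p ∈ S, p := by ring_nf; ring_nf at hlt; omega
    exact Nat.lt_of_mul_lt_mul_left this
  -- now case on card
  have hc1 : 1 ≤ S.card := Finset.card_pos.mpr hSne
  interval_cases h : S.card
  · obtain ⟨p, hp⟩ := Finset.card_eq_one.mp h
    rw [hp] at hcancel hodd
    simp at hcancel hodd
    obtain ⟨h3, -⟩ := hodd
    omega
  · obtain ⟨p, q, hpq, hpqS⟩ := Finset.card_eq_two.mp h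
    rw [hpqS] at hcancel hodd
    have hp := hodd p (by simp)
    have hq := hodd q (by simp)
    rw [Finset.prod_pair hpq, Finset.prod_pair hpq] at hcancel
    obtain ⟨hp3, k, hk⟩ := hp
    obtain ⟨hq3, m, hm⟩ := hq
    subst hk hm
    have hkm : k ≠ m := by rintro rfl; exact hpq rfl
    have hk1 : 1 ≤ k := by omega
    have hm1 : 1 ≤ m := by omega
    simp only [Nat.add_sub_cancel] at hcancel
    have key : 4 * (k * m) < 2 * k + 2 * m + 1 := by nlinarith [hcancel]
    rcases hkm.lt_or_gt with h' | h'
    · have hm2 : 2 ≤ m := by omega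
      have h1 : 2 * k ≤ k * m := by nlinarith
      have h2 : m ≤ k * m := Nat.le_mul_of_pos_left m hk1
      linarith
    · have hk2 : 2 ≤ k := by omega
      have h1 : 2 * m ≤ k * m := by nlinarith
      have h2 : k ≤ k * m := Nat.le_mul_of_pos_right k hm1
      linarith

theorem stmt12 :
    (∀ n p q α β : ℕ, Odd n → n.Perfect → p.Prime → q.Prime → p ≠ q →
      Odd p → Odd q → Even α → Odd β → n ≠ p ^ α * q ^ β) ∧
    (∀ n : ℕ, Odd n → n.Perfect → 3 ≤ n.primeFactors.card) := by
  constructor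
  · intro n p q α β ho hperf hp hq hpq hop hoq hα hβ hne
    have h3 := three_le_card n ho hperf
    have hsub : n.primeFactors ⊆ {p, q} := by
      intro r hr
      have hrp := Nat.prime_of_mem_primeFactors hr
      have hrd := Nat.dvd_of_mem_primeFactors hr
      rw [hne] at hrd
      rcases hrp.dvd_mul.mp hrd with h | h
      · have h1 := (Nat.prime_dvd_prime_iff_eq hrp hp).mp (hrp.dvd_of_dvd_pow h)
        simp [h1]
      · have h1 := (Nat.prime_dvd_prime_iff_eq hrp hq).mp (hrp.dvd_of_dvd_pow h)
        simp [h1]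
    have := Finset.card_le_card hsub
    have : ({p, q} : Finset ℕ).card ≤ 2 := Finset.card_insert_le _ _ |>.trans (by simp)
    omega
  · exact three_le_card
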